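/- Let d ≥ 8 be an integer, and for ρ ∈ (0,1] set φ(ρ) = aρ/√(b − ρ²) with a = √(d/E(d)), b = 1 + d/2 − 7d(d−1)/E(d), E(d) = √((46d²−291d−49)(d−1)) + 7(d−1). Then φ satisfies (1−ρ²)φ''(ρ) + ((d−1)/ρ − 2ρ)φ'(ρ) − (d−1)(φ(ρ) + 14φ(ρ)³ − 3(23d−170)φ(ρ)⁵)/ρ² = 0 for all ρ ∈ (0,1). -/

import Mathlib

lemma sqrt_deriv_aux (b ρ : ℝ) (hs : 0 < b - ρ^2) :
    HasDerivAt (fun x => Real.sqrt (b - x^2)) (-ρ / Real.sqrt (b - ρ^2)) ρ := by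
  have h1 : HasDerivAt (fun x : ℝ => b - x^2) (-(2*ρ)) ρ := by
    simpa using ((hasDerivAt_pow 2 ρ).const_sub b)
  have h2 := h1.sqrt hs.ne'
  have hsq : 0 < Real.sqrt (b - ρ^2) := Real.sqrt_pos.mpr hs
  convert h2 using 1
  field_simp

lemma phi_deriv (a b ρ : ℝ) (hs : 0 < b - ρ^2) :
    HasDerivAt (fun x => a * x / Real.sqrt (b - x^2))
      (a * b / (Real.sqrt (b - ρ^2))^3) ρ := by
  have hsq : 0 < Real.sqrt (b - ρ^2) := Real.sqrt_pos.mpr hs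
  have h2 : (Real.sqrt (b - ρ^2))^2 = b - ρ^2 := Real.sq_sqrt hs.le
  have hnum : HasDerivAt (fun x : ℝ => a * x) a ρ := by
    simpa using (hasDerivAt_id ρ).const_mul a
  have h := hnum.fun_div (sqrt_deriv_aux b ρ hs) hsq.ne'
  refine h.congr_deriv (Eq.symm ?_)
  field_simp
  linear_combination (-a) * h2

lemma phi_deriv2 (a b ρ : ℝ) (hs : 0 < b - ρ^2) :
    HasDerivAt (fun x => a * b / (Real.sqrt (b - x^2))^3)
      (3*a*b*ρ / (Real.sqrt (b - ρ^2))^5) ρ := by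
  have hsq : 0 < Real.sqrt (b - ρ^2) := Real.sqrt_pos.mpr hs
  have h2 : (Real.sqrt (b - ρ^2))^2 = b - ρ^2 := Real.sq_sqrt hs.le
  have hden : HasDerivAt (fun x => (Real.sqrt (b - x^2))^3)
      (3*(Real.sqrt (b-ρ^2))^2*(-ρ / Real.sqrt (b-ρ^2))) ρ := by
    simpa using (sqrt_deriv_aux b ρ hs).fun_pow 3
  have h := (hasDerivAt_const ρ (a*b)).fun_div hden (pow_ne_zero 3 hsq.ne')
  refine h.congr_deriv (Eq.symm ?_)
  field_simp
  linear_combination (0:ℝ) * h2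

theorem stmt_4 (d : ℤ) (hd : 8 ≤ d)
    (E a b : ℝ)
    (hE : E = Real.sqrt ((46*(d:ℝ)^2 - 291*(d:ℝ) - 49) * ((d:ℝ) - 1)) + 7*((d:ℝ) - 1))
    (ha : a = Real.sqrt ((d:ℝ) / E))
    (hb : b = 1 + (d:ℝ)/2 - 7*(d:ℝ)*((d:ℝ)-1)/E)
    (φ : ℝ → ℝ)
    (hφ : φ = fun ρ => a * ρ / Real.sqrt (b - ρ^2)) :
    ∀ ρ ∈ Set.Ioo (0:ℝ) 1,
      (1 - ρ^2) * deriv (deriv φ) ρ + (((d:ℝ) - 1)/ρ - 2*ρ) * deriv φ ρ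
        - ((d:ℝ) - 1) * (φ ρ + 14 * (φ ρ)^3 - 3*(23*(d:ℝ) - 170) * (φ ρ)^5) / ρ^2 = 0 := by
  have hd' : (8:ℝ) ≤ (d:ℝ) := by exact_mod_cast hd
  set D : ℝ := (d:ℝ) with hD
  have hX : (0:ℝ) ≤ (46*D^2 - 291*D - 49) * (D - 1) := by nlinarith
  have hsx : Real.sqrt ((46*D^2 - 291*D - 49) * (D - 1)) ^ 2
      = (46*D^2 - 291*D - 49) * (D - 1) := Real.sq_sqrt hX
  have hEgt : 14 * (D - 1) < E := by
    have h7 : 7 * (D - 1) < Real.sqrt ((46*D^2 - 291*D - 49) * (D - 1)) := by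
      rw [show (7 * (D-1)) = Real.sqrt ((7*(D-1))^2) from (Real.sqrt_sq (by nlinarith)).symm]
      apply Real.sqrt_lt_sqrt (by positivity)
      nlinarith
    rw [hE]; linarith
  have hEpos : 0 < E := by nlinarith
  have hE2 : E^2 = 14*(D-1)*E + 2*D*(D-1)*(23*D-170) := by
    rw [hE]; linear_combination hsx
  have ha2 : a^2 = D / E := by
    rw [ha]; exact Real.sq_sqrt (by positivity)
  have hb1 : (1:ℝ) < b := by
    rw [hb]
    have : 7*D*(D-1)/E < D/2 := by
      rw [div_lt_div_iff₀ hEpos (by norm_num)]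
      nlinarith
    linarith
  have hc1 : 3 + (D - 1) - 2*b - 14*(D-1)*a^2 = 0 := by
    rw [ha2, hb]; field_simp; ring
  have hc2 : b + (D - 1) - 14*(D-1)*a^2 - 3*(D-1)*(23*D-170)*(a^2)^2 = 0 := by
    rw [ha2, hb]
    field_simp
    linear_combination (3*D) * hE2
  intro ρ hρ
  obtain ⟨h0, h1⟩ := hρ
  have hs : 0 < b - ρ^2 := by nlinarith
  set u : ℝ := Real.sqrt (b - ρ^2) with hu
  have hupos : 0 < u := Real.sqrt_pos.mpr hs
  have hu2 : u^2 = b - ρ^2 := Real.sq_sqrt hs.le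
  -- deriv φ equals ψ near ρ
  have hUopen : IsOpen {x : ℝ | 0 < b - x^2} :=
    isOpen_lt continuous_const (continuous_const.sub (continuous_pow 2))
  have hmemU : ρ ∈ {x : ℝ | 0 < b - x^2} := hs
  have hd1 : ∀ x ∈ {x : ℝ | 0 < b - x^2}, deriv φ x = a * b / (Real.sqrt (b - x^2))^3 := by
    intro x hx
    rw [hφ]
    exact (phi_deriv a b x hx).deriv
  have heq : deriv φ =ᶠ[nhds ρ] fun x => a * b / (Real.sqrt (b - x^2))^3 :=
    Filter.eventuallyEq_of_mem (hUopen.mem_nhds hmemU) hd1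
  have hderiv2 : deriv (deriv φ) ρ = 3*a*b*ρ / u^5 := by
    rw [heq.deriv_eq]
    exact (phi_deriv2 a b ρ hs).deriv
  have hderiv1 : deriv φ ρ = a * b / u^3 := hd1 ρ hmemU
  have hφρ : φ ρ = a * ρ / u := by rw [hφ]
  rw [hderiv2, hderiv1, hφρ]
  have hmain : 3*b*ρ^2*(1-ρ^2) + ((D-1)-2*ρ^2)*b*u^2
      - (D-1)*(u^4 + 14*a^2*ρ^2*u^2 - 3*(23*D-170)*(a^2)^2*ρ^4) = 0 := by
    linear_combination (b*ρ^2) * hc1 + (-ρ^4) * hc2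
      + (((D-1)-2*ρ^2)*b - (D-1)*(u^2 + (b-ρ^2) + 14*a^2*ρ^2)) * hu2
  have hρne : ρ ≠ 0 := h0.ne'
  have hune : u ≠ 0 := hupos.ne'
  have hz : a/(ρ*u^5) * (3*b*ρ^2*(1-ρ^2) + ((D-1)-2*ρ^2)*b*u^2
      - (D-1)*(u^4 + 14*a^2*ρ^2*u^2 - 3*(23*D-170)*(a^2)^2*ρ^4)) = 0 := by
    rw [hmain, mul_zero]
  rw [← hz]
  field_simp
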